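/- Let (h,u) be a C¹ smooth solution of the radially symmetric isentropic Euler equations in sound-speed form on an open set contained in {r > 0}, with h > 0 and c₁ c₂ ≠ 0 everywhere on that set. Then at every point, ∂₁ h = −((γ−1)/2) h^{(γ+1)/(2(γ−1))} ( α̃ + (m u²/(r c₂)) h^{(γ−3)/(2(γ−1))} ). -/
import Mathlib


open Real Set

/-- Partial derivative with respect to the spatial variable `r` (first coordinate). -/
noncomputable def pdr (f : ℝ × ℝ → ℝ) (p : ℝ × ℝ) : ℝ := fderiv ℝ f p (1, 0)

/-- Partial derivative with respect to the time variable `t` (second coordinate). -/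
noncomputable def pdt (f : ℝ × ℝ → ℝ) (p : ℝ × ℝ) : ℝ := fderiv ℝ f p (0, 1)

/-- Directional derivative `∂_t + c ∂_r` along a characteristic with speed `c`. -/
noncomputable def Dc (c f : ℝ × ℝ → ℝ) (p : ℝ × ℝ) : ℝ := pdt f p + c p * pdr f p

/-- `(h,u)` solves the radially symmetric isentropic Euler equations in
sound-speed form on the set `U`. -/
def IsEulerSound (γ : ℝ) (m : ℕ) (U : Set (ℝ × ℝ)) (h u : ℝ × ℝ → ℝ) : Prop :=
  ∀ p ∈ U,
    pdt h p + u p * pdr h p + (γ - 1) / 2 * h p * pdr u p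
      = -((γ - 1) / 2) * ((m : ℝ) * u p * h p / p.1) ∧
    pdt u p + u p * pdr u p + 2 / (γ - 1) * h p * pdr h p = 0

/-- The gradient variable `α = u_r + (2/(γ-1)) h_r + m h u / (r c₂)`. -/
noncomputable def alp (γ : ℝ) (m : ℕ) (h u : ℝ × ℝ → ℝ) (p : ℝ × ℝ) : ℝ :=
  pdr u p + 2 / (γ - 1) * pdr h p + (m : ℝ) * h p * u p / (p.1 * (u p + h p))

/-- The gradient variable `β = u_r - (2/(γ-1)) h_r - m h u / (r c₁)`. -/
noncomputable def bet (γ : ℝ) (m : ℕ) (h u : ℝ × ℝ → ℝ) (p : ℝ × ℝ) : ℝ :=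
  pdr u p - 2 / (γ - 1) * pdr h p - (m : ℝ) * h p * u p / (p.1 * (u p - h p))

/-- The weighted gradient variable `α̃ = h^{(γ-3)/(2(γ-1))} α`. -/
noncomputable def alpT (γ : ℝ) (m : ℕ) (h u : ℝ × ℝ → ℝ) (p : ℝ × ℝ) : ℝ :=
  h p ^ ((γ - 3) / (2 * (γ - 1))) * alp γ m h u p

/-- The weighted gradient variable `β̃ = h^{(γ-3)/(2(γ-1))} β`. -/
noncomputable def betT (γ : ℝ) (m : ℕ) (h u : ℝ × ℝ → ℝ) (p : ℝ × ℝ) : ℝ :=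
  h p ^ ((γ - 3) / (2 * (γ - 1))) * bet γ m h u p

/-- for a `C¹` smooth solution with `h > 0` and `c₁c₂ ≠ 0`,
`∂₁h = -((γ-1)/2) h^{(γ+1)/(2(γ-1))} (α̃ + (mu²/(rc₂)) h^{(γ-3)/(2(γ-1))})`. -/
theorem d1_h_equation
    (γ : ℝ) (hγ : 1 < γ) (m : ℕ) (hm : 1 ≤ m)
    (U : Set (ℝ × ℝ)) (hU : IsOpen U) (hUr : ∀ p ∈ U, 0 < p.1)
    (h u : ℝ × ℝ → ℝ) (hhpos : ∀ p ∈ U, 0 < h p)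
    (hc : ∀ p ∈ U, (u p - h p) * (u p + h p) ≠ 0)
    (hhC : ContDiffOn ℝ 1 h U) (huC : ContDiffOn ℝ 1 u U)
    (heuler : IsEulerSound γ m U h u) :
    ∀ p ∈ U,
      Dc (fun q => u q - h q) h p
        = -((γ - 1) / 2) * h p ^ ((γ + 1) / (2 * (γ - 1)))
            * (alpT γ m h u p
              + (m : ℝ) * u p ^ 2 / (p.1 * (u p + h p))
                * h p ^ ((γ - 3) / (2 * (γ - 1)))) := by
  intro p hp
  obtain ⟨e1, e2⟩ := heuler p hp
  have hh := hhpos p hp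
  have hr := (hUr p hp).ne'
  have hc2 : u p + h p ≠ 0 := fun h0 => hc p hp (by rw [h0]; ring)
  have hγ1 : γ - 1 ≠ 0 := by linarith
  unfold Dc alpT alp
  set A := h p ^ ((γ + 1) / (2 * (γ - 1))) with hA
  set B := h p ^ ((γ - 3) / (2 * (γ - 1))) with hB
  have hAB : A * B = h p := by
    rw [hA, hB, ← Real.rpow_add hh]
    have : (γ + 1) / (2 * (γ - 1)) + (γ - 3) / (2 * (γ - 1)) = 1 := by
      field_simp; ring
    rw [this, Real.rpow_one]
  have hdiv : (m : ℝ) * h p * u p / (p.1 * (u p + h p))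
      + (m : ℝ) * u p ^ 2 / (p.1 * (u p + h p)) = (m : ℝ) * u p / p.1 := by
    field_simp; ring
  have h2 : (γ - 1) / 2 * (2 / (γ - 1)) = 1 := by field_simp
  have mid : -((γ - 1) / 2) * A
      * (B * (pdr u p + 2 / (γ - 1) * pdr h p
            + (m : ℝ) * h p * u p / (p.1 * (u p + h p)))
        + (m : ℝ) * u p ^ 2 / (p.1 * (u p + h p)) * B)
      = -((γ - 1) / 2) * h p
        * (pdr u p + 2 / (γ - 1) * pdr h p + (m : ℝ) * u p / p.1) := by
    linear_combination
      (-((γ - 1) / 2) * (pdr u p + 2 / (γ - 1) * pdr h p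
          + (m : ℝ) * h p * u p / (p.1 * (u p + h p))
          + (m : ℝ) * u p ^ 2 / (p.1 * (u p + h p)))) * hAB
      + (-((γ - 1) / 2) * h p) * hdiv
  rw [mid]
  have hmu : (γ - 1) / 2 * ((m : ℝ) * u p * h p / p.1)
      = (γ - 1) / 2 * h p * ((m : ℝ) * u p / p.1) := by ring
  linear_combination e1 + (h p * pdr h p) * h2
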